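/- Let N ≥ 2 be odd. There exists a constant M < ∞, depending only on N and max_i ‖aᵢ‖_{L∞}, with the following property: if u : ℝ × ℝⁿ → ℝ is a smooth global solution of the PDE ∂u/∂t = Δu + P(u) that is bounded on each slab [−T, T] × ℝⁿ (T > 0), then u is bounded on all of ℝ^{n+1} with sup_{ℝ^{n+1}} |u| ≤ M. -/

import Mathlib

open MeasureTheory Filter Topology
open scoped ENNReal

noncomputable section

/-- Euclidean space `ℝⁿ`. -/
abbrev Spc (n : ℕ) := EuclideanSpace ℝ (Fin n)

/-- The Laplacian in the spatial variables. -/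
noncomputable def lap {n : ℕ} (f : Spc n → ℝ) (x : Spc n) : ℝ :=
  ∑ i : Fin n, fderiv ℝ (fun y => fderiv ℝ f y (EuclideanSpace.single i 1)) x
    (EuclideanSpace.single i 1)

/-- The polynomial nonlinearity `P(f)(x) = -f(x)^N + ∑_{i<N} aᵢ(x) f(x)^i`. -/
noncomputable def Pfun {n N : ℕ} (a : Fin N → Spc n → ℝ) (f : Spc n → ℝ) (x : Spc n) : ℝ :=
  -(f x) ^ N + ∑ i : Fin N, a i x * f x ^ (i : ℕ)

/-- The time derivative `∂u/∂t`. -/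
noncomputable def timeDeriv {n : ℕ} (u : ℝ × Spc n → ℝ) (t : ℝ) (x : Spc n) : ℝ :=
  deriv (fun s => u (s, x)) t

/-- `u` is a global solution of `∂u/∂t = Δu + P(u)`. -/
def IsSol {n N : ℕ} (a : Fin N → Spc n → ℝ) (u : ℝ × Spc n → ℝ) : Prop :=
  ∀ t x, timeDeriv u t x = lap (fun y => u (t, y)) x + Pfun a (fun y => u (t, y)) x

/-- `w` is an equilibrium: `Δw + P(w) = 0`. -/
def IsEquilibrium {n N : ℕ} (a : Fin N → Spc n → ℝ) (w : Spc n → ℝ) : Prop :=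
  ∀ x, lap w x + Pfun a w x = 0

/-- The energy density `|∂u/∂t|² + |Δu + P(u)|²`. -/
noncomputable def energyDensity {n N : ℕ} (a : Fin N → Spc n → ℝ) (u : ℝ × Spc n → ℝ)
    (t : ℝ) (x : Spc n) : ℝ :=
  (timeDeriv u t x) ^ 2 + (lap (fun y => u (t, y)) x + Pfun a (fun y => u (t, y)) x) ^ 2

/-- The energy `E(u) = (1/2) ∫_ℝ ∫_{ℝⁿ} (|∂u/∂t|² + |Δu + P(u)|²) dx dt`, valued in `ℝ≥0∞`. -/
noncomputable def energy {n N : ℕ} (a : Fin N → Spc n → ℝ) (u : ℝ × Spc n → ℝ) : ℝ≥0∞ :=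
  (1 / 2) * ∫⁻ t : ℝ, ∫⁻ x : Spc n, ENNReal.ofReal (energyDensity a u t x)

/-- The action density `(1/2)|∇f|² + f^{N+1}/(N+1) - ∑_{i<N} aᵢ f^{i+1}/(i+1)`. -/
noncomputable def actionDensity {n N : ℕ} (a : Fin N → Spc n → ℝ) (f : Spc n → ℝ)
    (x : Spc n) : ℝ :=
  (1 / 2) * ‖gradient f x‖ ^ 2 + f x ^ (N + 1) / (N + 1)
    - ∑ i : Fin N, a i x * f x ^ ((i : ℕ) + 1) / ((i : ℕ) + 1)

/-- The action functional `A(f)`. -/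
noncomputable def action {n N : ℕ} (a : Fin N → Spc n → ℝ) (f : Spc n → ℝ) : ℝ :=
  ∫ x : Spc n, actionDensity a f x

/-- `f` has finite action. -/
def FiniteAction {n N : ℕ} (a : Fin N → Spc n → ℝ) (f : Spc n → ℝ) : Prop :=
  Integrable (actionDensity a f)

/-- The coefficients `aᵢ` are smooth, in `L¹ ∩ L∞`, with all derivatives of all orders
bounded. -/
def GoodCoeffs {n N : ℕ} (a : Fin N → Spc n → ℝ) : Prop :=
  ∀ i, ContDiff ℝ (⊤ : ℕ∞) (a i) ∧ Integrable (a i) ∧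
    ∀ k : ℕ, ∃ C : ℝ, ∀ x, ‖iteratedFDeriv ℝ k (a i) x‖ ≤ C

/-- `u`, `∂u/∂t` and the spatial derivatives of `u` up to order two are bounded by a
constant multiple of `(1+|x|)^{-(n+1)}`, uniformly for `t` in compact intervals. -/
def AdmissibleDecay {n : ℕ} (u : ℝ × Spc n → ℝ) : Prop :=
  ∀ T > (0 : ℝ), ∃ C : ℝ, ∀ t : ℝ, ∀ x : Spc n, |t| ≤ T →
    |u (t, x)| ≤ C * (1 + ‖x‖) ^ (-(n + 1 : ℝ)) ∧
    |timeDeriv u t x| ≤ C * (1 + ‖x‖) ^ (-(n + 1 : ℝ)) ∧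
    ‖fderiv ℝ (fun y => u (t, y)) x‖ ≤ C * (1 + ‖x‖) ^ (-(n + 1 : ℝ)) ∧
    ‖iteratedFDeriv ℝ 2 (fun y => u (t, y)) x‖ ≤ C * (1 + ‖x‖) ^ (-(n + 1 : ℝ))


open Filter Topology Set

/-- Second derivative test at a global max. -/
lemma second_deriv_nonpos_of_max {h h' : ℝ → ℝ} {d : ℝ}
    (hd : ∀ s, HasDerivAt h (h' s) s) (hd' : HasDerivAt h' d 0)
    (hmax : ∀ s, h s ≤ h 0) : d ≤ 0 := by
  have h'0 : h' 0 = 0 := by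
    have : deriv h 0 = 0 := by
      apply IsLocalMax.deriv_eq_zero
      exact (isMaxOn_univ_iff.2 hmax).isLocalMax (by simp)
    rw [(hd 0).deriv] at this; exact this
  by_contra hdp
  push_neg at hdp
  -- slope of h' at 0 tends to d > 0
  have hs := hasDerivAt_iff_tendsto_slope.1 hd'
  have hev : ∀ᶠ s in 𝓝[>] (0:ℝ), 0 < slope h' 0 s := by
    have : ∀ᶠ s in 𝓝[≠] (0:ℝ), 0 < slope h' 0 s :=
      hs (Ioi_mem_nhds hdp)
    exact this.filter_mono (nhdsWithin_mono _ fun s hs => ne_of_gt hs)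
  rcases (mem_nhdsGT_iff_exists_Ioo_subset).1 hev with ⟨η, hη, hsub⟩
  have hη0 : (0:ℝ) < η := by
    simpa using hη
  -- h' positive on (0, η)
  have hpos : ∀ s ∈ Ioo (0:ℝ) η, 0 < h' s := by
    intro s hsmem
    have h2 : 0 < h' s / s := by
      have := hsub hsmem
      simpa [slope_def_field, h'0] using this
    have := mul_pos h2 hsmem.1
    rwa [div_mul_cancel₀] at this
    exact ne_of_gt hsmem.1
  -- MVT on [0, η/2]
  obtain ⟨c, hc, hceq⟩ := exists_hasDerivAt_eq_slope h h' (by linarith : (0:ℝ) < η/2)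
    (fun s _ => (hd s).continuousAt.continuousWithinAt) (fun s hsmem => hd s)
  have hc' : 0 < h' c := hpos c ⟨hc.1, by linarith [hc.2]⟩
  rw [hceq] at hc'
  have : h (η/2) ≤ h 0 := hmax _
  have : (h (η/2) - h 0) / (η/2 - 0) ≤ 0 := by
    apply div_nonpos_of_nonpos_of_nonneg <;> linarith
  linarith

/-- At a max over `[t₀,t₁]` attained at `t* > t₀`, the derivative is `≥ 0`. -/
lemma deriv_nonneg_of_max_left {g : ℝ → ℝ} {d t₀ t₁ ts : ℝ}
    (hg : HasDerivAt g d ts) (hmax : ∀ s ∈ Icc t₀ t₁, g s ≤ g ts)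
    (h0 : t₀ < ts) (h1 : ts ≤ t₁) : 0 ≤ d := by
  have hs := hasDerivAt_iff_tendsto_slope.1 hg
  have hmono : 𝓝[<] ts ≤ 𝓝[≠] ts := nhdsWithin_mono _ fun s hs => ne_of_lt hs
  have hev : ∀ᶠ s in 𝓝[<] ts, 0 ≤ slope g ts s := by
    filter_upwards [Ioo_mem_nhdsLT_of_mem (⟨h0, le_refl _⟩ : ts ∈ Ioc t₀ ts)] with s hsm
    have hle : g s ≤ g ts := hmax s ⟨hsm.1.le, le_trans hsm.2.le h1⟩
    have : s - ts < 0 := by linarith [hsm.2]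
    rw [slope_def_field]
    rw [div_nonneg_iff]
    right
    constructor <;> [skip; linarith]
    simp only [sub_nonpos]
    exact hle
  exact ge_of_tendsto (hs.mono_left hmono) hev

lemma add_pow_ge {a c : ℝ} (ha : 0 ≤ a) (hc : 0 ≤ c) :
    ∀ {k : ℕ}, 1 ≤ k → a ^ k + c ^ k ≤ (a + c) ^ k := by
  intro k hk
  induction k with
  | zero => omega
  | succ m ih =>
    rcases Nat.eq_or_lt_of_le hk with h | h
    · simp [← h]
    · have hm : 1 ≤ m := by omega
      have := ih hm
      have e1 : a ^ (m+1) = a ^ m * a := pow_succ a m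
      have e2 : c ^ (m+1) = c ^ m * c := pow_succ c m
      calc a ^ (m+1) + c ^ (m+1) ≤ (a + c) * (a ^ m + c ^ m) := by
            rw [e1, e2]
            nlinarith [mul_nonneg ha (pow_nonneg hc m), mul_nonneg hc (pow_nonneg ha m)]
        _ ≤ (a + c) * (a + c) ^ m := by nlinarith [pow_nonneg ha m, pow_nonneg hc m, add_nonneg ha hc, pow_nonneg (add_nonneg ha hc) m]
        _ = (a + c) ^ (m + 1) := by ring
open Filter Topology Set

section LapHelpers
variable {n : ℕ}

lemma spc_slice_contDiff {u : ℝ × Spc n → ℝ} (hu : ContDiff ℝ (⊤ : ℕ∞) u) (t : ℝ) :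
    ContDiff ℝ (⊤ : ℕ∞) (fun y : Spc n => u (t, y)) :=
  hu.comp ((contDiff_const).prodMk contDiff_id)

lemma fderiv_apply_contDiff {f : Spc n → ℝ} (hf : ContDiff ℝ (⊤ : ℕ∞) f) (v : Spc n) :
    ContDiff ℝ (⊤ : ℕ∞) (fun y => fderiv ℝ f y v) := by
  have h1 : ContDiff ℝ (⊤ : ℕ∞) (fderiv ℝ f) := hf.fderiv_right (by exact_mod_cast le_top)
  exact (ContinuousLinearMap.apply ℝ ℝ v).contDiff.comp h1

lemma lap_nonpos_of_max {f : Spc n → ℝ} (hf : ContDiff ℝ (⊤ : ℕ∞) f) {z : Spc n}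
    (hmax : ∀ y, f y ≤ f z) : lap f z ≤ 0 := by
  apply Finset.sum_nonpos
  intro i _
  set e : Spc n := EuclideanSpace.single i 1 with he
  set L : ℝ → Spc n := fun s => z + s • e with hL
  have hLd : ∀ s : ℝ, HasDerivAt L e s := by
    intro s
    simpa [hL] using ((hasDerivAt_id s).smul_const e).const_add z
  have hL0 : L 0 = z := by simp [hL]
  set F : Spc n → ℝ := fun y => fderiv ℝ f y e with hF
  have hFc : ContDiff ℝ (⊤ : ℕ∞) F := fderiv_apply_contDiff hf e
  have hd : ∀ s, HasDerivAt (f ∘ L) (F (L s)) s := fun s =>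
    ((hf.differentiable (by simp) (L s)).hasFDerivAt).comp_hasDerivAt s (hLd s)
  have hd' : HasDerivAt (F ∘ L) (fderiv ℝ F z e) 0 := by
    have := ((hFc.differentiable (by simp) (L 0)).hasFDerivAt).comp_hasDerivAt 0 (hLd 0)
    rwa [hL0] at this
  have hm : ∀ s, (f ∘ L) s ≤ (f ∘ L) 0 := by
    intro s; simp only [Function.comp, hL0]
    exact hmax (L s)
  exact second_deriv_nonpos_of_max hd hd' hm

lemma lap_sub {f g : Spc n → ℝ} (hf : ContDiff ℝ (⊤ : ℕ∞) f) (hg : ContDiff ℝ (⊤ : ℕ∞) g)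
    (x : Spc n) : lap (fun y => f y - g y) x = lap f x - lap g x := by
  unfold lap
  rw [← Finset.sum_sub_distrib]
  apply Finset.sum_congr rfl
  intro i _
  set e : Spc n := EuclideanSpace.single i 1 with he
  have h1 : (fun y => fderiv ℝ (fun y' => f y' - g y') y e)
      = fun y => fderiv ℝ f y e - fderiv ℝ g y e := by
    funext y
    rw [fderiv_fun_sub (hf.differentiable (by simp) y) (hg.differentiable (by simp) y)]
    simp
  rw [h1, fderiv_fun_sub ((fderiv_apply_contDiff hf e).differentiable (by simp) x)
    ((fderiv_apply_contDiff hg e).differentiable (by simp) x)]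
  simp

lemma lap_const_mul {g : Spc n → ℝ} (hg : ContDiff ℝ (⊤ : ℕ∞) g) (c : ℝ)
    (x : Spc n) : lap (fun y => c * g y) x = c * lap g x := by
  unfold lap
  rw [Finset.mul_sum]
  apply Finset.sum_congr rfl
  intro i _
  set e : Spc n := EuclideanSpace.single i 1 with he
  have h1 : (fun y => fderiv ℝ (fun y' => c * g y') y e)
      = fun y => c * fderiv ℝ g y e := by
    funext y
    rw [fderiv_const_mul (hg.differentiable (by simp) y)]
    simp
  rw [h1, fderiv_const_mul ((fderiv_apply_contDiff hg e).differentiable (by simp) x)]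
  simp

lemma phi0_eq_norm_sq (y : Spc n) : (∑ j : Fin n, y j ^ 2) = ‖y‖ ^ 2 := by
  rw [EuclideanSpace.norm_eq, Real.sq_sqrt]
  · apply Finset.sum_congr rfl; intro j _; rw [Real.norm_eq_abs, sq_abs]
  · positivity

lemma phi0_contDiff : ContDiff ℝ (⊤ : ℕ∞) (fun y : Spc n => ∑ j : Fin n, y j ^ 2) := by
  apply ContDiff.sum
  intro j _
  exact (EuclideanSpace.proj (𝕜 := ℝ) j).contDiff.pow 2

lemma phi0_hasFDerivAt (y : Spc n) :
    HasFDerivAt (fun y : Spc n => ∑ j : Fin n, y j ^ 2)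
      (∑ j : Fin n, (y j • EuclideanSpace.proj (𝕜 := ℝ) j
        + y j • EuclideanSpace.proj (𝕜 := ℝ) j)) y := by
  apply HasFDerivAt.fun_sum
  intro j _
  have hp := (EuclideanSpace.proj (𝕜 := ℝ) j).hasFDerivAt (x := y)
  have := hp.fun_mul hp
  simpa [sq] using this

lemma lap_phi0 (x : Spc n) : lap (fun y : Spc n => ∑ j : Fin n, y j ^ 2) x = 2 * n := by
  unfold lap
  have key : ∀ i : Fin n,
      fderiv ℝ (fun y => fderiv ℝ (fun y' : Spc n => ∑ j : Fin n, y' j ^ 2) y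
        (EuclideanSpace.single i 1)) x (EuclideanSpace.single i 1) = 2 := by
    intro i
    have h1 : (fun y => fderiv ℝ (fun y' : Spc n => ∑ j : Fin n, y' j ^ 2) y
        (EuclideanSpace.single i 1)) = fun y : Spc n => 2 * y i := by
      funext y
      rw [(phi0_hasFDerivAt y).fderiv]
      simp [EuclideanSpace.single_apply, ite_mul, mul_ite, Finset.sum_add_distrib, Finset.sum_ite_eq', mul_comm]
      ring
    rw [h1]
    have h2 : HasFDerivAt (fun y : Spc n => 2 * y i)
        ((2 : ℝ) • EuclideanSpace.proj (𝕜 := ℝ) i) x :=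
      (EuclideanSpace.proj (𝕜 := ℝ) i).hasFDerivAt.const_mul 2
    rw [h2.fderiv]
    simp [EuclideanSpace.single_apply]
  rw [Finset.sum_congr rfl (fun i _ => key i)]
  simp [mul_comm]
end LapHelpers

section Main
open Filter Topology Set

/-- Sum-of-squares coercive weight. -/
private def phi0 {n : ℕ} (y : Spc n) : ℝ := ∑ j : Fin n, y j ^ 2

lemma phi0_nonneg {n : ℕ} (y : Spc n) : 0 ≤ phi0 y :=
  Finset.sum_nonneg fun j _ => sq_nonneg _

lemma phi0_contDiff' {n : ℕ} : ContDiff ℝ (⊤ : ℕ∞) (phi0 (n := n)) := by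
  unfold phi0; exact phi0_contDiff

lemma lap_phi0' {n : ℕ} (x : Spc n) : lap (phi0 (n := n)) x = 2 * n := by
  unfold phi0; exact lap_phi0 x

set_option maxHeartbeats 1000000 in
lemma upper_bound {n N : ℕ} (hN : 3 ≤ N) (B : ℝ) (hB0 : 0 ≤ B)
    (a : Fin N → Spc n → ℝ) (hB : ∀ i x, |a i x| ≤ B)
    (u : ℝ × Spc n → ℝ) (hu : ContDiff ℝ (⊤ : ℕ∞) u) (hsol : IsSol a u)
    (hslab : ∀ T > (0 : ℝ), ∃ C : ℝ, ∀ (t : ℝ) (x : Spc n), |t| ≤ T → |u (t, x)| ≤ C) :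
    ∀ p : ℝ × Spc n, u p ≤ 2 + 2 * N * B := by
  rintro ⟨t₁, x₁⟩
  set M₀ : ℝ := 1 + 2 * N * B with hM₀def
  have hM₀1 : (1:ℝ) ≤ M₀ := by
    have : (0:ℝ) ≤ 2 * N * B := by positivity
    simp only [hM₀def]; linarith
  have hM₀pos : (0:ℝ) < M₀ := by linarith
  -- slab bound
  obtain ⟨C, hC⟩ := hslab (|t₁| + 2) (by positivity)
  set C' : ℝ := max C 0 with hC'def
  have hC' : ∀ (t : ℝ) (x : Spc n), |t| ≤ |t₁| + 2 → |u (t, x)| ≤ C' :=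
    fun t x ht => le_trans (hC t x ht) (le_max_left _ _)
  have hC'0 : 0 ≤ C' := le_max_right _ _
  -- parameters
  have hNR : (2:ℝ) ≤ (N:ℝ) - 1 := by
    have : (3:ℝ) ≤ (N:ℝ) := by exact_mod_cast hN
    linarith
  set γ : ℝ := 1 / ((N:ℝ) - 1) with hγdef
  have hγpos : 0 < γ := by rw [hγdef]; positivity
  have hγhalf : γ ≤ 1/2 := by
    rw [hγdef, div_le_div_iff₀ (by linarith) (by norm_num)]; linarith
  have hγN : γ * ((N:ℝ) - 1) = 1 := by
    rw [hγdef]; field_simp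
  set δ : ℝ := (C' + 1) ^ (-((N:ℝ) - 1)) with hδdef
  have hδpos : 0 < δ := Real.rpow_pos_of_pos (by linarith) _
  have hδ1 : δ ≤ 1 :=
    Real.rpow_le_one_of_one_le_of_nonpos (by linarith) (by linarith)
  set t₀ : ℝ := -|t₁| - 1 with ht₀def
  set τ : ℝ := t₀ - δ with hτdef
  have ht₀τ : t₀ - τ = δ := by rw [hτdef]; ring
  have ht₀t₁ : t₀ < t₁ := by
    have := neg_abs_le t₁; simp only [ht₀def]; linarith
  set b : ℝ → ℝ := fun t => M₀ + (t - τ) ^ (-γ) with hbdef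
  -- derivative of b
  have hbderiv : ∀ t : ℝ, τ < t → HasDerivAt b (-γ * (t - τ) ^ (-γ - 1)) t := by
    intro t ht
    have h1 : HasDerivAt (fun s : ℝ => s - τ) 1 t := (hasDerivAt_id t).sub_const τ
    have h2 := Real.hasDerivAt_rpow_const (x := t - τ) (p := -γ)
      (Or.inl (ne_of_gt (by linarith)))
    have h3 := (h2.comp t h1)
    have h4 := h3.const_add M₀
    simpa [Function.comp, hbdef] using h4
  have hbδ : ∀ t, t₀ ≤ t → τ < t := fun t ht => by
    have := hδpos; simp only [hτdef] at *; linarith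
  -- value at t₀
  have hbt₀ : b t₀ = M₀ + (C' + 1) := by
    have h1 : ((C' + 1) ^ (-((N:ℝ) - 1))) ^ (-γ) = (C' + 1) ^ ((-((N:ℝ)-1)) * (-γ)) :=
      (Real.rpow_mul (show (0:ℝ) ≤ C' + 1 by linarith) (-((N:ℝ)-1)) (-γ)).symm
    have h2 : (-((N:ℝ)-1)) * (-γ) = 1 := by
      rw [neg_mul_neg, mul_comm]; exact hγN
    simp only [hbdef, ht₀τ, hδdef]
    rw [h1, h2, Real.rpow_one]
  -- value at t₁
  have hbt₁ : b t₁ ≤ M₀ + 1 := by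
    have h1 : (1:ℝ) ≤ t₁ - τ := by
      have := neg_abs_le t₁
      simp only [hτdef, ht₀def]; linarith [hδpos]
    have : (t₁ - τ) ^ (-γ) ≤ 1 :=
      Real.rpow_le_one_of_one_le_of_nonpos h1 (by linarith)
    simp only [hbdef]; linarith
  have hbM₀ : ∀ t, t₀ ≤ t → M₀ < b t := by
    intro t ht
    have h0 : 0 < t - τ := by linarith [hbδ t ht]
    have := Real.rpow_pos_of_pos h0 (-γ)
    simp only [hbdef]; linarith
  -- main claim by contradiction
  by_contra hcon
  push_neg at hcon
  have hu₁ : M₀ + 1 < u (t₁, x₁) := by simp only [hM₀def]; linarith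
  set ε : ℝ := min (M₀ ^ N / (8 * (n + 1))) ((u (t₁, x₁) - (M₀ + 1)) / (2 * (1 + phi0 x₁)))
    with hεdef
  have hφ₁ : 0 ≤ phi0 x₁ := phi0_nonneg x₁
  have hεpos : 0 < ε := by
    apply lt_min
    · positivity
    · apply div_pos (by linarith) (by positivity)
  have hε8 : ε ≤ M₀ ^ N / (8 * (n + 1)) := min_le_left _ _
  -- the comparison function
  set w : ℝ × Spc n → ℝ := fun q => u q - ε * phi0 q.2 - b q.1 with hwdef
  -- the key claim
  have hkey : w (t₁, x₁) ≤ 0 := by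
    set A : ℝ := C' + 1 + |w (t₁, x₁)| with hAdef
    have hApos : 0 < A := by positivity
    set R : ℝ := Real.sqrt (A / ε) with hRdef
    -- outside the ball of radius R, w is small
    have houts : ∀ t : ℝ, t ∈ Icc t₀ t₁ → ∀ x : Spc n, R < ‖x‖ →
        w (t, x) < w (t₁, x₁) := by
      intro t ht x hx
      have htT : |t| ≤ |t₁| + 2 := by
        rw [abs_le]
        constructor
        · have := ht.1; simp only [ht₀def] at this; linarith
        · have := ht.2; linarith [le_abs_self t₁]
      have h1 : u (t, x) ≤ C' := le_trans (le_abs_self _) (hC' t x htT)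
      have h2 : A / ε < phi0 x := by
        have hR0 : 0 ≤ R := Real.sqrt_nonneg _
        have : R ^ 2 < ‖x‖ ^ 2 := by nlinarith
        rw [hRdef, Real.sq_sqrt (by positivity)] at this
        calc A / ε < ‖x‖ ^ 2 := this
          _ = phi0 x := (phi0_eq_norm_sq x).symm
      have h3 : A < ε * phi0 x := by
        rw [div_lt_iff₀ hεpos] at h2; linarith [h2]
      have h4 : 0 < b t := lt_trans hM₀pos (hbM₀ t ht.1)
      have h5 : w (t, x) ≤ C' - ε * phi0 x := by
        simp only [hwdef]; linarith
      have h6 : -|w (t₁, x₁)| ≤ w (t₁, x₁) := neg_abs_le _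
      simp only [hAdef] at h3
      linarith
    have hx₁R : ‖x₁‖ ≤ R := by
      by_contra hxR
      push_neg at hxR
      exact absurd (houts t₁ ⟨ht₀t₁.le, le_refl _⟩ x₁ hxR) (lt_irrefl _)
    -- compactness
    set K : Set (ℝ × Spc n) := Icc t₀ t₁ ×ˢ Metric.closedBall (0 : Spc n) R with hKdef
    have hKc : IsCompact K := isCompact_Icc.prod (isCompact_closedBall (0 : Spc n) R)
    have hmem₁ : (t₁, x₁) ∈ K := by
      constructor
      · exact ⟨ht₀t₁.le, le_refl _⟩
      · simpa [Metric.mem_closedBall, dist_eq_norm] using hx₁R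
    have hwcont : ContinuousOn w K := by
      apply ContinuousOn.sub
      · apply ContinuousOn.sub
        · exact hu.continuous.continuousOn
        · exact (continuous_const.mul
            ((phi0_contDiff (n := n)).continuous.comp continuous_snd)).continuousOn
      · intro q hq
        have hq1 : τ < q.1 := hbδ q.1 hq.1.1
        exact (((hbderiv q.1 hq1).continuousAt).comp
          (continuous_fst.continuousAt)).continuousWithinAt
    obtain ⟨⟨ts, xs⟩, hsmem, hsmax⟩ := hKc.exists_isMaxOn ⟨(t₁, x₁), hmem₁⟩ hwcont
    -- max over the whole slab
    have hmaxall : ∀ t ∈ Icc t₀ t₁, ∀ x : Spc n, w (t, x) ≤ w (ts, xs) := by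
      intro t ht x
      by_cases hx : ‖x‖ ≤ R
      · exact hsmax (⟨ht, by simpa [Metric.mem_closedBall, dist_eq_norm] using hx⟩ : (t, x) ∈ K)
      · push_neg at hx
        exact le_trans (houts t ht x hx).le (hsmax hmem₁)
    -- show the max is ≤ 0
    have hwstar : w (ts, xs) ≤ 0 := by
      by_contra hpos
      push_neg at hpos
      have hts : ts ∈ Icc t₀ t₁ := hsmem.1
      simp only [hwdef] at hpos
      set m : ℝ := u (ts, xs) with hmdef
      have hφs : 0 ≤ phi0 xs := phi0_nonneg xs
      have hmb : b ts < m := by linarith [mul_nonneg hεpos.le hφs]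
      have hmM₀ : M₀ < m := lt_trans (hbM₀ ts hts.1) hmb
      have hm1 : (1:ℝ) ≤ m := by linarith
      rcases eq_or_lt_of_le hts.1 with hts0 | hts0
      · -- at the initial time: contradiction with the slab bound
        have htsT : |ts| ≤ |t₁| + 2 := by
          rw [← hts0, ht₀def, abs_le]; constructor <;> simp <;> linarith [abs_nonneg t₁]
        have h1 : m ≤ C' := le_trans (le_abs_self _) (hC' ts xs htsT)
        have h2 : b ts = M₀ + (C' + 1) := by rw [← hts0, hbt₀]
        linarith
      · -- interior (in time) maximum
        set s : ℝ := ts - τ with hsdef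
        have hspos : 0 < s := by simp only [hsdef]; linarith [hbδ ts hts.1]
        set X : ℝ := s ^ (-γ - 1) with hXdef
        have hXpos : 0 < X := Real.rpow_pos_of_pos hspos _
        -- time derivative inequality
        have hdu : HasDerivAt (fun r : ℝ => u (r, xs)) (timeDeriv u ts xs) ts := by
          have hdiff : DifferentiableAt ℝ (fun r : ℝ => u (r, xs)) ts := by
            have h1 : DifferentiableAt ℝ u (ts, xs) :=
              hu.differentiable (by simp) (ts, xs)
            exact h1.comp ts (differentiableAt_id.prodMk (differentiableAt_const xs))
          exact hdiff.hasDerivAt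
        have hgd : HasDerivAt (fun r : ℝ => w (r, xs))
            (timeDeriv u ts xs - (-γ * s ^ (-γ - 1))) ts := by
          have h1 := (hdu.sub_const (ε * phi0 xs)).sub (hbderiv ts (hbδ ts hts.1))
          simpa [hwdef, hsdef, sub_sub, Pi.sub_def] using h1
        have htime : 0 ≤ timeDeriv u ts xs - (-γ * X) := by
          apply deriv_nonneg_of_max_left hgd _ hts0 hts.2
          intro r hr
          exact hmaxall r hr xs
        -- spatial maximum inequality
        set f : Spc n → ℝ := fun y => u (ts, y) - ε * phi0 y with hfdef
        have hfc : ContDiff ℝ (⊤ : ℕ∞) f :=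
          (spc_slice_contDiff hu ts).sub (contDiff_const.mul phi0_contDiff')
        have hfmax : ∀ y, f y ≤ f xs := by
          intro y
          have := hmaxall ts hts y
          simp only [hwdef, hfdef] at this ⊢
          linarith [this]
        have hlapf : lap f xs ≤ 0 := lap_nonpos_of_max hfc hfmax
        have hlapeq : lap f xs = lap (fun y => u (ts, y)) xs - ε * (2 * n) := by
          rw [hfdef]
          rw [lap_sub (spc_slice_contDiff hu ts) (contDiff_const.mul phi0_contDiff')]
          rw [lap_const_mul phi0_contDiff', lap_phi0']
        have hlapu : lap (fun y => u (ts, y)) xs ≤ 2 * n * ε := by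
          rw [hlapeq] at hlapf; linarith
        -- nonlinearity bound
        have hP : Pfun a (fun y => u (ts, y)) xs ≤ -(m ^ N) / 2 := by
          have hsum : ∑ i : Fin N, a i xs * u (ts, xs) ^ (i : ℕ) ≤ N * B * m ^ (N - 1) := by
            have hterm : ∀ i : Fin N, a i xs * m ^ (i : ℕ) ≤ B * m ^ (N - 1) := by
              intro i
              have h1 : m ^ (i : ℕ) ≤ m ^ (N - 1) :=
                pow_le_pow_right₀ hm1 (by omega : (i : ℕ) ≤ N - 1)
              have h2 : a i xs * m ^ (i : ℕ) ≤ B * m ^ (i : ℕ) := by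
                apply mul_le_mul_of_nonneg_right _ (by positivity)
                exact le_trans (le_abs_self _) (hB i xs)
              calc a i xs * m ^ (i:ℕ) ≤ B * m ^ (i:ℕ) := h2
                _ ≤ B * m ^ (N-1) := mul_le_mul_of_nonneg_left h1 hB0
            calc ∑ i : Fin N, a i xs * u (ts, xs) ^ (i:ℕ)
                ≤ ∑ _i : Fin N, B * m ^ (N-1) := Finset.sum_le_sum (fun i _ => hterm i)
              _ = N * B * m ^ (N-1) := by rw [Finset.sum_const]; simp; ring
          have hNB : (N:ℝ) * B * m ^ (N - 1) ≤ m ^ N / 2 := by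
            have h1 : (N:ℝ) * B ≤ m / 2 := by
              have : 2 * (N:ℝ) * B ≤ M₀ := by simp only [hM₀def]; linarith
              linarith
            have h2 : m ^ N = m * m ^ (N - 1) := by
              conv_lhs => rw [show N = (N - 1) + 1 by omega]
              rw [pow_succ]; ring
            rw [h2]
            have h3 : (0:ℝ) ≤ m ^ (N-1) := by positivity
            calc (N:ℝ) * B * m ^ (N-1) ≤ (m / 2) * m ^ (N-1) :=
                  mul_le_mul_of_nonneg_right h1 h3
              _ = m * m ^ (N-1) / 2 := by ring
          unfold Pfun
          have : (-(u (ts, xs) ^ N) : ℝ) = -(m ^ N) := by rw [hmdef]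
          rw [this]
          linarith
        -- barrier lower bound for m^N
        have hmN : M₀ ^ N + X ≤ m ^ N := by
          have hsγ : (0:ℝ) < s ^ (-γ) := Real.rpow_pos_of_pos hspos _
          have h1 : M₀ ^ N + (s ^ (-γ)) ^ N ≤ (M₀ + s ^ (-γ)) ^ N :=
            add_pow_ge hM₀pos.le hsγ.le (by omega)
          have h2 : (s ^ (-γ)) ^ N = X := by
            rw [hXdef, ← Real.rpow_natCast (s ^ (-γ)) N, ← Real.rpow_mul hspos.le]
            congr 1
            have : -γ * (N:ℝ) = -(γ * ((N:ℝ) - 1)) - γ := by ring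
            rw [this, hγN]; ring
          have h3 : (M₀ + s ^ (-γ)) ^ N ≤ m ^ N := by
            apply pow_le_pow_left₀ (by positivity)
            simp only [hbdef] at hmb
            linarith [hmb]
          rw [h2] at h1
          linarith
        -- combine via the PDE
        have hpde := hsol ts xs
        have h2nε : 2 * (n:ℝ) * ε ≤ M₀ ^ N / 4 := by
          have h1 : 2 * (n:ℝ) * ε ≤ 2 * (n:ℝ) * (M₀ ^ N / (8 * (n+1))) := by
            apply mul_le_mul_of_nonneg_left hε8 (by positivity)
          have h2 : 2 * (n:ℝ) * (M₀ ^ N / (8 * (n+1))) ≤ M₀ ^ N / 4 := by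
            have e1 : 2 * (n:ℝ) * (M₀ ^ N / (8 * (n+1))) = M₀ ^ N * (2 * n / (8 * (n+1))) := by
              ring
            have e2 : 2 * (n:ℝ) / (8 * (n+1)) ≤ 1/4 := by
              rw [div_le_div_iff₀ (by positivity) (by norm_num)]
              have : (0:ℝ) ≤ (n:ℝ) := Nat.cast_nonneg n
              linarith
            have e3 : M₀ ^ N * (2 * (n:ℝ) / (8 * (n+1))) ≤ M₀ ^ N * (1/4) :=
              mul_le_mul_of_nonneg_left e2 (by positivity)
            rw [e1]; linarith [e3]
          linarith
        have hM₀N : (0:ℝ) < M₀ ^ N := by positivity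
        have hfinal : timeDeriv u ts xs ≤ 2 * n * ε - (M₀ ^ N + X) / 2 := by
          rw [hpde]
          have := hP
          linarith [hlapu, hmN]
        have hgood : γ * X ≤ (1/2) * X :=
          mul_le_mul_of_nonneg_right hγhalf hXpos.le
        linarith [htime, hfinal, h2nε, hM₀N, hgood]
    exact le_trans (hsmax hmem₁) hwstar
  -- conclude
  have hεx₁ : ε * phi0 x₁ ≤ (u (t₁, x₁) - (M₀ + 1)) / 2 := by
    have h1 : ε ≤ (u (t₁, x₁) - (M₀ + 1)) / (2 * (1 + phi0 x₁)) := min_le_right _ _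
    have h2 : ε * phi0 x₁ ≤ ε * (1 + phi0 x₁) :=
      mul_le_mul_of_nonneg_left (by linarith) hεpos.le
    have h3 : ε * (1 + phi0 x₁) ≤ (u (t₁, x₁) - (M₀ + 1)) / 2 := by
      rw [le_div_iff₀ (by norm_num : (0:ℝ) < 2)]
      rw [le_div_iff₀ (by positivity : (0:ℝ) < 2 * (1 + phi0 x₁))] at h1
      calc ε * (1 + phi0 x₁) * 2 = ε * (2 * (1 + phi0 x₁)) := by ring
        _ ≤ _ := h1
    linarith
  have : u (t₁, x₁) ≤ ε * phi0 x₁ + b t₁ := by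
    simp only [hwdef] at hkey; linarith
  linarith [hbt₁]

end Main

section Final
open Filter Topology Set

lemma lap_neg {n : ℕ} (f : Spc n → ℝ) (x : Spc n) :
    lap (fun y => -f y) x = -lap f x := by
  unfold lap
  rw [← Finset.sum_neg_distrib]
  apply Finset.sum_congr rfl
  intro i _
  have h1 : (fun y => fderiv ℝ (fun y' => -f y') y (EuclideanSpace.single i 1)) =
      fun y => -(fderiv ℝ f y (EuclideanSpace.single i 1)) := by
    funext y; rw [fderiv_fun_neg]; simp
  rw [h1]
  have h2 : fderiv ℝ (fun y => -(fderiv ℝ f y (EuclideanSpace.single i 1))) x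
      = -fderiv ℝ (fun y => fderiv ℝ f y (EuclideanSpace.single i 1)) x := fderiv_neg
  rw [h2]; simp

lemma Pfun_neg {n N : ℕ} (hodd : Odd N) (a : Fin N → Spc n → ℝ) (f : Spc n → ℝ) (x : Spc n) :
    Pfun (fun i z => (-1:ℝ) ^ ((i:ℕ) + 1) * a i z) (fun y => -f y) x = -Pfun a f x := by
  unfold Pfun
  have hterm : ∀ i : Fin N,
      (-1:ℝ) ^ ((i:ℕ) + 1) * a i x * (-f x) ^ (i:ℕ) = -(a i x * f x ^ (i:ℕ)) := by
    intro i
    have hpow : (-1:ℝ) ^ ((i:ℕ) + 1) * (-1:ℝ) ^ (i:ℕ) = -1 := by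
      rw [← pow_add]
      exact Odd.neg_one_pow ⟨(i:ℕ), by ring⟩
    rw [neg_pow]
    linear_combination (a i x * f x ^ (i:ℕ)) * hpow
  have hsum : ∑ i : Fin N, (-1:ℝ) ^ ((i:ℕ) + 1) * a i x * (-f x) ^ (i:ℕ)
      = ∑ i : Fin N, -(a i x * f x ^ (i:ℕ)) := Finset.sum_congr rfl (fun i _ => hterm i)
  simp only []
  rw [hodd.neg_pow, hsum, Finset.sum_neg_distrib]
  ring

end Final
/-- Let `N ≥ 2` be odd. There is a constant `M`, depending only on `N`
and a bound `B` on `max_i ‖aᵢ‖_∞`, such that every smooth global solution of the PDE which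
is bounded on each slab `[-T,T] × ℝⁿ` satisfies `|u| ≤ M` on all of `ℝ^{n+1}`. -/
theorem odd_degree_solutions_bounded
    {N : ℕ} (hN : 2 ≤ N) (hodd : Odd N) (B : ℝ) :
    ∃ M : ℝ, ∀ n : ℕ, 1 ≤ n →
      ∀ a : Fin N → Spc n → ℝ, GoodCoeffs a → (∀ i x, |a i x| ≤ B) →
      ∀ u : ℝ × Spc n → ℝ, ContDiff ℝ (⊤ : ℕ∞) u → IsSol a u →
      (∀ T > (0 : ℝ), ∃ C : ℝ, ∀ (t : ℝ) (x : Spc n), |t| ≤ T → |u (t, x)| ≤ C) →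
      ∀ p : ℝ × Spc n, |u p| ≤ M := by
  refine ⟨2 + 2 * N * max B 0, ?_⟩
  intro n _hn a _hgood hBa u hu hsol hslab p
  have hN3 : 3 ≤ N := by obtain ⟨k, hk⟩ := hodd; omega
  have hB' : ∀ i x, |a i x| ≤ max B 0 := fun i x => le_trans (hBa i x) (le_max_left _ _)
  have hup := upper_bound hN3 (max B 0) (le_max_right _ _) a hB' u hu hsol hslab p
  have hB'' : ∀ (i : Fin N) (x : Spc n), |(-1:ℝ) ^ ((i:ℕ) + 1) * a i x| ≤ max B 0 := by
    intro i x
    rw [abs_mul, abs_pow, abs_neg, abs_one, one_pow, one_mul]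
    exact hB' i x
  have hsolneg : IsSol (fun i z => (-1:ℝ) ^ ((i:ℕ) + 1) * a i z) (fun q => -u q) := by
    intro t x
    have h1 : timeDeriv (fun q : ℝ × Spc n => -u q) t x = -timeDeriv u t x := by
      unfold timeDeriv
      exact deriv.neg
    have h2 : lap (fun y => -u (t, y)) x = -lap (fun y => u (t, y)) x := lap_neg _ x
    have h3 := Pfun_neg hodd a (fun y => u (t, y)) x
    calc timeDeriv (fun q : ℝ × Spc n => -u q) t x = -timeDeriv u t x := h1
      _ = -(lap (fun y => u (t, y)) x + Pfun a (fun y => u (t, y)) x) := by rw [hsol t x]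
      _ = lap (fun y => -u (t, y)) x
          + Pfun (fun i z => (-1:ℝ) ^ ((i:ℕ) + 1) * a i z) (fun y => -u (t, y)) x := by
        rw [h2, h3]; ring
  have hslabneg : ∀ T > (0 : ℝ), ∃ C : ℝ, ∀ (t : ℝ) (x : Spc n), |t| ≤ T →
      |(fun q : ℝ × Spc n => -u q) (t, x)| ≤ C := by
    intro T hT
    obtain ⟨C, hC⟩ := hslab T hT
    exact ⟨C, fun t x ht => by simpa [abs_neg] using hC t x ht⟩
  have hlow := upper_bound hN3 (max B 0) (le_max_right _ _) _ hB''
    (fun q => -u q) hu.neg hsolneg hslabneg p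
  have hlow' : -u p ≤ 2 + 2 * N * max B 0 := hlow
  exact abs_le.2 ⟨by linarith [hlow'], hup⟩

end
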